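/- Let β ∈ F_{q^n}, β ≠ 0, and let k be a positive integer with d := gcd(q,k) > 1; set k' = k/d. If the minimal polynomial of β^{k'} over Fq is m_{β^{k'}}(X) = Σ_{i=0}^{m} a_i X^i, then the minimal polynomial of β^k over Fq is m_{β^k}(X) = Σ_{i=0}^{m} a_i^{d} X^i; in particular, m_{β^k} and m_{β^{k'}} have the same degree and the same order. -/
import Mathlib


open Polynomial

/-- The order of a polynomial over a finite field: the least positive integer `e`
such that `f ∣ X^e − 1`. -/
noncomputable def polyOrder {F : Type*} [Field F] (f : Polynomial F) : ℕ :=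
  sInf {e : ℕ | 0 < e ∧ f ∣ Polynomial.X ^ e - 1}

/-- Let `β ∈ F_{q^n}`, `β ≠ 0`, and `k ≥ 1` with `d := gcd(q,k) > 1`;
set `k' = k / d`. If `m_{β^{k'}}(X) = ∑_{i=0}^m a_i X^i`, then
`m_{β^k}(X) = ∑_{i=0}^m a_i^d X^i`; in particular `m_{β^k}` and `m_{β^{k'}}` have the same
degree and the same order. -/
theorem stmt5 {F E : Type*} [Field F] [Fintype F] [Field E] [Algebra F E]
    (n : ℕ) (hn : 0 < n) (hrank : Module.finrank F E = n)
    (β : E) (hβ0 : β ≠ 0)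
    (k : ℕ) (hk : 0 < k)
    (d : ℕ) (hd : d = Nat.gcd (Fintype.card F) k) (hd1 : 1 < d)
    (k' : ℕ) (hk' : k' = k / d)
    (m : ℕ) (hm : m = (minpoly F (β ^ k')).natDegree) :
    minpoly F (β ^ k)
        = ∑ i ∈ Finset.range (m + 1),
            Polynomial.C ((minpoly F (β ^ k')).coeff i ^ d) * X ^ i
      ∧ (minpoly F (β ^ k)).natDegree = (minpoly F (β ^ k')).natDegree
      ∧ polyOrder (minpoly F (β ^ k)) = polyOrder (minpoly F (β ^ k')) := by
  classical
  -- the characteristic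
  set p := ringChar F with hpdef
  haveI : CharP F p := ringChar.charP F
  have hp : p.Prime := CharP.char_is_prime F p
  haveI : Fact p.Prime := ⟨hp⟩
  haveI : CharP E p := charP_of_injective_algebraMap (algebraMap F E).injective p
  obtain ⟨s, -, hcard⟩ := FiniteField.card F p
  -- `d` is a power of `p`
  have hdvd : d ∣ p ^ (s : ℕ) := by
    rw [← hcard]; exact hd ▸ Nat.gcd_dvd_left _ _
  obtain ⟨t, ht, hdt⟩ := (Nat.dvd_prime_pow hp).mp hdvd
  -- finite dimensionality
  haveI : FiniteDimensional F E := by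
    apply FiniteDimensional.of_finrank_pos; omega
  set γ := β ^ k' with hγ
  have hγint : IsIntegral F γ := IsIntegral.of_finite F γ
  have hkd : k' * d = k := by
    rw [hk']
    exact Nat.div_mul_cancel (hd ▸ Nat.gcd_dvd_right _ _)
  have hβk : β ^ k = γ ^ d := by rw [hγ, ← pow_mul, hkd]
  -- Frobenius maps
  set φ : F →+* F := iterateFrobenius F p t with hφ
  set ψ : E →+* E := iterateFrobenius E p t with hψ
  have hφd : ∀ a : F, φ a = a ^ d := fun a => by rw [hφ, iterateFrobenius_def, hdt]
  have hψd : ∀ a : E, ψ a = a ^ d := fun a => by rw [hψ, iterateFrobenius_def, hdt]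
  set g := minpoly F γ with hg
  -- the key identity
  have hcomp : (algebraMap F E).comp φ = ψ.comp (algebraMap F E) := by
    ext a
    simp [hφd, hψd, map_pow]
  have haev : Polynomial.aeval (γ ^ d) (g.map φ) = 0 := by
    have h1 : Polynomial.aeval (γ ^ d) (g.map φ)
        = Polynomial.eval₂ ((algebraMap F E).comp φ) (γ ^ d) g := by
      rw [Polynomial.aeval_def, Polynomial.eval₂_map]
    rw [h1, hcomp, ← hψd γ, ← Polynomial.hom_eval₂, ← Polynomial.aeval_def,
      minpoly.aeval, map_zero]
  -- φ as a ring equiv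
  have hbij : Function.Bijective φ := ⟨φ.injective, Finite.surjective_of_injective φ.injective⟩
  set e : F ≃+* F := RingEquiv.ofBijective φ hbij with he
  have hmapeq : g.map φ = (Polynomial.mapEquiv e) g := by
    rw [Polynomial.mapEquiv_apply]
    congr 1
  have hirr : Irreducible (g.map φ) := by
    rw [hmapeq]
    exact (MulEquiv.irreducible_iff (Polynomial.mapEquiv e).toMulEquiv).mpr
      (minpoly.irreducible hγint)
  have hmonic : (g.map φ).Monic := (minpoly.monic hγint).map φ
  have hmin : minpoly F (β ^ k) = g.map φ := by
    rw [hβk]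
    exact (minpoly.eq_of_irreducible_of_monic hirr haev hmonic).symm
  have hdeg : (g.map φ).natDegree = g.natDegree := Polynomial.natDegree_map φ
  refine ⟨?_, by rw [hmin, hdeg], ?_⟩
  · rw [hmin]
    have h1 : g.map φ = ∑ i ∈ Finset.range (m + 1), Polynomial.monomial i ((g.map φ).coeff i) :=
      Polynomial.as_sum_range' _ (m + 1) (by rw [hdeg]; omega)
    rw [h1]
    refine Finset.sum_congr rfl fun i _ => ?_
    rw [Polynomial.coeff_map, hφd, Polynomial.C_mul_X_pow_eq_monomial]
  · have key : ∀ x : ℕ, (g.map φ ∣ X ^ x - 1 ↔ g ∣ X ^ x - 1) := by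
      intro x
      have hX : (Polynomial.mapEquiv e) (X ^ x - 1 : Polynomial F) = X ^ x - 1 := by
        simp [Polynomial.mapEquiv_apply, Polynomial.map_sub, Polynomial.map_pow]
      rw [hmapeq]
      conv_lhs => rw [← hX]
      exact map_dvd_iff (Polynomial.mapEquiv e).toMulEquiv
    rw [hmin]
    unfold polyOrder
    congr 1
    ext x
    simp only [Set.mem_setOf_eq, and_congr_right_iff]
    intro _
    exact key x
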